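/- Let 0 < τ < π, and set m = sin(τ)/τ and k = (2/τ)·tan(τ/2). Then the kick-move-kick product of 2×2 real matrices [[1,0],[−kτ/2,1]] · [[1, mτ],[0,1]] · [[1,0],[−kτ/2,1]] equals the rotation matrix [[cos τ, sin τ],[−sin τ, cos τ]]. (I.e., the symmetric splitting scheme with modified kinetic coefficient m and modified stiffness k reproduces the exact time-τ flow of the harmonic oscillator H = (p² + q²)/2.) -/

import Mathlib

open Real

theorem kick_move_kick_harmonic_oscillator_exact
    (τ : ℝ) (h0 : 0 < τ) (hπ : τ < Real.pi)
    (m k : ℝ) (hm : m = Real.sin τ / τ) (hk : k = (2 / τ) * Real.tan (τ / 2)) :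
    !![1, 0; -(k * τ / 2), 1] * !![1, m * τ; 0, 1] * !![1, 0; -(k * τ / 2), 1]
      = !![Real.cos τ, Real.sin τ; -Real.sin τ, Real.cos τ] := by
  have hτ : τ ≠ 0 := ne_of_gt h0
  have hc : Real.cos (τ / 2) ≠ 0 :=
    ne_of_gt (Real.cos_pos_of_mem_Ioo ⟨by linarith [Real.pi_pos], by linarith⟩)
  have hmτ : m * τ = Real.sin τ := by rw [hm]; field_simp
  have hkτ : k * τ / 2 = Real.tan (τ / 2) := by rw [hk]; field_simp
  rw [hmτ, hkτ, Real.tan_eq_sin_div_cos]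
  have hsin : Real.sin τ = 2 * Real.sin (τ/2) * Real.cos (τ/2) := by
    rw [← Real.sin_two_mul]; ring_nf
  have hpy := Real.sin_sq_add_cos_sq (τ/2)
  have hcos : Real.cos τ = 1 - 2 * Real.sin (τ/2)^2 := by
    have h2 := Real.cos_two_mul (τ/2)
    have : 2 * (τ/2) = τ := by ring
    rw [this] at h2; nlinarith
  ext i j
  fin_cases i <;> fin_cases j <;>
    simp [Matrix.mul_apply, Fin.sum_univ_succ, hsin, hcos] <;>
    field_simp <;>
    first
      | ring1
      | linear_combination (2 * Real.sin (τ/2) * Real.cos (τ/2)^2) * hpy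
      | linear_combination (2 * Real.sin (τ/2)) * hpy
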